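/- For all integers m and n, with x = 4(n^2-2m^2)(n^2+2mn+2m^2)(n^2+4mn+2m^2), z = 16mn(n+m)(n+2m)(n^2+2mn+2m^2), and b = 4(n^2+2mn+2m^2)^3, the identity x^2 + z^2 = b^2 holds. -/
import Mathlib


theorem stmt_1 (m n x z b : ℤ)
    (hx : x = 4*(n^2-2*m^2)*(n^2+2*m*n+2*m^2)*(n^2+4*m*n+2*m^2))
    (hz : z = 16*m*n*(n+m)*(n+2*m)*(n^2+2*m*n+2*m^2))
    (hb : b = 4*(n^2+2*m*n+2*m^2)^3) :
    x^2 + z^2 = b^2 := by subst hx hz hb; ring
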